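/- In any pure Nash equilibrium under the EQUI policy, if a coalition T makes a collective move in which every job of T strictly improves its cost, then the move preserves the number of jobs on every machine. -/

import Mathlib

/-- EQUI cost of job `i` in profile `σ` on unrelated machines. -/
def equiCost {n m : ℕ} (p : Fin n → Fin m → ℝ) (σ : Fin n → Fin m) (i : Fin n) : ℝ :=
  ∑ i' ∈ Finset.univ.filter (fun i' => σ i' = σ i), min (p i (σ i)) (p i' (σ i))

/-- Pure Nash equilibrium under EQUI. -/
def equiNE {n m : ℕ} (p : Fin n → Fin m → ℝ) (σ : Fin n → Fin m) : Prop :=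
  ∀ (i : Fin n) (b : Fin m), equiCost p σ i ≤ equiCost p (Function.update σ i b) i

/-- In any pure Nash equilibrium under EQUI, if a coalition `T` makes a
collective move in which every job of `T` strictly improves its cost, then the move
preserves the number of jobs on every machine. -/
theorem equi_coalition_preserves_counts
    {n m : ℕ} (p : Fin n → Fin m → ℝ) (hp : ∀ i j, 0 < p i j)
    (σ : Fin n → Fin m) (hNE : equiNE p σ)
    (T : Finset (Fin n)) (σ' : Fin n → Fin m)
    (hout : ∀ i ∉ T, σ' i = σ i)
    (himp : ∀ i ∈ T, equiCost p σ' i < equiCost p σ i) :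
    ∀ j : Fin m,
      (Finset.univ.filter (fun i => σ i = j)).card =
        (Finset.univ.filter (fun i => σ' i = j)).card := by
  classical
  -- Key strict inequality for each member of the coalition.
  have key : ∀ i ∈ T,
      ∑ i' ∈ (T.filter (fun i' => σ' i' = σ' i)).erase i, min (p i (σ' i)) (p i' (σ' i)) <
      ∑ i' ∈ (T.filter (fun i' => σ i' = σ' i)).erase i, min (p i (σ' i)) (p i' (σ' i)) := by
    intro i hi
    set j' := σ' i with hj'
    set F : Fin n → ℝ := fun i' => min (p i j') (p i' j') with hF
    set τ := Function.update σ i j' with hτ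
    have hτi : τ i = j' := Function.update_self i j' σ
    have h1 : equiCost p σ' i < equiCost p τ i :=
      lt_of_lt_of_le (himp i hi) (hNE i j')
    have e1 : equiCost p σ' i = ∑ i' ∈ Finset.univ.filter (fun i' => σ' i' = j'), F i' := rfl
    have e2 : equiCost p τ i = ∑ i' ∈ Finset.univ.filter (fun i' => τ i' = j'), F i' := by
      unfold equiCost
      simp only [hτi]
      rfl
    have hs1a : (Finset.univ.filter (fun i' => σ' i' = j')).filter (fun i' => i' ∈ T)
        = T.filter (fun i' => σ' i' = j') := by
      ext i'; simp [and_comm]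
    have hs1b : (Finset.univ.filter (fun i' => σ' i' = j')).filter (fun i' => i' ∉ T)
        = (Finset.univ.filter (fun i' => σ i' = j')).filter (fun i' => i' ∉ T) := by
      ext i'
      simp only [Finset.mem_filter, Finset.mem_univ, true_and, and_congr_left_iff]
      intro hT; rw [hout i' hT]
    have hs2a : (Finset.univ.filter (fun i' => τ i' = j')).filter (fun i' => i' ∈ T)
        = insert i ((T.filter (fun i' => σ i' = j')).erase i) := by
      ext i'
      simp only [Finset.mem_filter, Finset.mem_univ, true_and, Finset.mem_insert,
        Finset.mem_erase]
      by_cases h : i' = i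
      · subst h; simp [hτi, hi]
      · rw [hτ, Function.update_of_ne h]
        simp [h, and_comm]
    have hs2b : (Finset.univ.filter (fun i' => τ i' = j')).filter (fun i' => i' ∉ T)
        = (Finset.univ.filter (fun i' => σ i' = j')).filter (fun i' => i' ∉ T) := by
      ext i'
      simp only [Finset.mem_filter, Finset.mem_univ, true_and, and_congr_left_iff]
      intro hT
      have hne : i' ≠ i := fun h => hT (h ▸ hi)
      rw [hτ, Function.update_of_ne hne]
    have split1 : equiCost p σ' i
        = (∑ i' ∈ T.filter (fun i' => σ' i' = j'), F i')
          + ∑ i' ∈ (Finset.univ.filter (fun i' => σ i' = j')).filter (fun i' => i' ∉ T), F i' := by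
      rw [e1, ← Finset.sum_filter_add_sum_filter_not (Finset.univ.filter (fun i' => σ' i' = j'))
        (fun i' => i' ∈ T), hs1a, hs1b]
    have split2 : equiCost p τ i
        = (F i + ∑ i' ∈ (T.filter (fun i' => σ i' = j')).erase i, F i')
          + ∑ i' ∈ (Finset.univ.filter (fun i' => σ i' = j')).filter (fun i' => i' ∉ T), F i' := by
      rw [e2, ← Finset.sum_filter_add_sum_filter_not (Finset.univ.filter (fun i' => τ i' = j'))
        (fun i' => i' ∈ T), hs2a, hs2b, Finset.sum_insert (Finset.notMem_erase i _)]
    have hiS' : i ∈ T.filter (fun i' => σ' i' = j') := Finset.mem_filter.mpr ⟨hi, rfl⟩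
    have split1' : equiCost p σ' i
        = (F i + ∑ i' ∈ (T.filter (fun i' => σ' i' = j')).erase i, F i')
          + ∑ i' ∈ (Finset.univ.filter (fun i' => σ i' = j')).filter (fun i' => i' ∉ T), F i' := by
      rw [split1, Finset.add_sum_erase _ F hiS']
    rw [split1', split2] at h1
    have := lt_of_add_lt_add_right h1
    exact lt_of_add_lt_add_left this
  -- Cardinality inequality per machine, restricted to T.
  have hA : ∀ j, (T.filter (fun i => σ' i = j)).card ≤ (T.filter (fun i => σ i = j)).card := by
    intro j
    by_cases hS' : (T.filter (fun i => σ' i = j)).Nonempty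
    · obtain ⟨i, hiS', hmin⟩ := Finset.exists_min_image _ (fun i => p i j) hS'
      have hiT : i ∈ T := (Finset.mem_filter.mp hiS').1
      have hji : σ' i = j := (Finset.mem_filter.mp hiS').2
      have hk := key i hiT
      rw [hji] at hk
      have hL : ∑ i' ∈ (T.filter (fun i' => σ' i' = j)).erase i, min (p i j) (p i' j)
          = (((T.filter (fun i' => σ' i' = j)).erase i).card : ℝ) * p i j := by
        have hterm : ∀ i' ∈ (T.filter (fun i' => σ' i' = j)).erase i,
            min (p i j) (p i' j) = p i j := fun i' hi' =>
          min_eq_left (hmin i' (Finset.mem_of_mem_erase hi'))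
        rw [Finset.sum_congr rfl hterm, Finset.sum_const, nsmul_eq_mul]
      have hR : ∑ i' ∈ (T.filter (fun i' => σ i' = j)).erase i, min (p i j) (p i' j)
          ≤ ((T.filter (fun i' => σ i' = j)).card : ℝ) * p i j := by
        calc ∑ i' ∈ (T.filter (fun i' => σ i' = j)).erase i, min (p i j) (p i' j)
            ≤ ∑ _i' ∈ (T.filter (fun i' => σ i' = j)).erase i, p i j :=
              Finset.sum_le_sum (fun i' _ => min_le_left _ _)
          _ = (((T.filter (fun i' => σ i' = j)).erase i).card : ℝ) * p i j := by
              rw [Finset.sum_const, nsmul_eq_mul]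
          _ ≤ ((T.filter (fun i' => σ i' = j)).card : ℝ) * p i j := by
              have := Finset.card_erase_le (a := i) (s := T.filter (fun i' => σ i' = j))
              have hx := (hp i j).le
              exact mul_le_mul_of_nonneg_right (by exact_mod_cast this) hx
      have hlt : (((T.filter (fun i' => σ' i' = j)).erase i).card : ℝ) * p i j
          < ((T.filter (fun i' => σ i' = j)).card : ℝ) * p i j :=
        lt_of_lt_of_le (hL ▸ hk) hR
      have hcard : ((T.filter (fun i' => σ' i' = j)).erase i).card
          < (T.filter (fun i' => σ i' = j)).card := by
        have := (mul_lt_mul_iff_left₀ (hp i j)).mp hlt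
        exact_mod_cast this
      have hplus := Finset.card_erase_add_one hiS'
      omega
    · rw [Finset.not_nonempty_iff_eq_empty.mp hS']
      simp
  -- Equal totals force equality on each machine.
  have hsum : ∑ j : Fin m, (T.filter (fun i => σ' i = j)).card
      = ∑ j : Fin m, (T.filter (fun i => σ i = j)).card := by
    rw [← Finset.card_eq_sum_card_fiberwise (f := σ') (t := Finset.univ)
      (fun x _ => Finset.mem_univ _),
      ← Finset.card_eq_sum_card_fiberwise (f := σ) (t := Finset.univ)
      (fun x _ => Finset.mem_univ _)]
  have heq : ∀ j : Fin m,
      (T.filter (fun i => σ' i = j)).card = (T.filter (fun i => σ i = j)).card := by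
    intro j
    exact (Finset.sum_eq_sum_iff_of_le (fun j _ => hA j)).mp hsum j (Finset.mem_univ j)
  -- Assemble the full counts.
  intro j
  have d1 : ((Finset.univ.filter (fun i => σ i = j)).filter (fun i => i ∈ T)).card
      + ((Finset.univ.filter (fun i => σ i = j)).filter (fun i => i ∉ T)).card
      = (Finset.univ.filter (fun i => σ i = j)).card :=
    Finset.card_filter_add_card_filter_not (fun i => i ∈ T)
  have d2 : ((Finset.univ.filter (fun i => σ' i = j)).filter (fun i => i ∈ T)).card
      + ((Finset.univ.filter (fun i => σ' i = j)).filter (fun i => i ∉ T)).card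
      = (Finset.univ.filter (fun i => σ' i = j)).card :=
    Finset.card_filter_add_card_filter_not (fun i => i ∈ T)
  have e1 : (Finset.univ.filter (fun i => σ i = j)).filter (fun i => i ∈ T)
      = T.filter (fun i => σ i = j) := by
    ext i'; simp [and_comm]
  have e2 : (Finset.univ.filter (fun i => σ' i = j)).filter (fun i => i ∈ T)
      = T.filter (fun i => σ' i = j) := by
    ext i'; simp [and_comm]
  have e3 : (Finset.univ.filter (fun i => σ' i = j)).filter (fun i => i ∉ T)
      = (Finset.univ.filter (fun i => σ i = j)).filter (fun i => i ∉ T) := by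
    ext i'
    simp only [Finset.mem_filter, Finset.mem_univ, true_and, and_congr_left_iff]
    intro hT; rw [hout i' hT]
  rw [← d1, ← d2, e1, e2, e3, heq j]
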